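/- Let P ⊆ ℝ² be a polygon with rational diameter l = 1 + 2a > 0 (i.e. a > −1/2) achieved by the horizontal segment S = conv{(−a, 0), (1 + a, 0)} ⊆ P; that is, P contains S, and P contains no translate of a segment conv{p, p + l'·w} with w a primitive vector of ℤ² and l' > l. Then P is contained in the horizontal strip {(x, y) ∈ ℝ² : −l ≤ y ≤ l}. -/

import Mathlib

open Set Pointwise

noncomputable section

/-- The set of real numbers that are integers (the ring ℤ viewed inside ℝ). -/
def ZSet : Set ℝ := Set.range (fun z : ℤ => (z : ℝ))

/-- `T : ℝ^d → ℝ^d` is an affine `A`-unimodular transformation: `T x = M x + b` with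
`M` an integer matrix of determinant `±1` and `b ∈ A^d`. -/
def IsUnimodularMap {d : ℕ} (A : Set ℝ) (T : (Fin d → ℝ) → (Fin d → ℝ)) : Prop :=
  ∃ (M : Matrix (Fin d) (Fin d) ℤ) (b : Fin d → ℝ),
    (M.det = 1 ∨ M.det = -1) ∧ (∀ i, b i ∈ A) ∧
    ∀ x, T x = (M.map (fun z : ℤ => (z : ℝ))).mulVec x + b

/-- `Y` is an `A`-unimodular copy of `X`. -/
def IsUnimodCopy {d : ℕ} (A : Set ℝ) (X Y : Set (Fin d → ℝ)) : Prop :=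
  ∃ T, IsUnimodularMap A T ∧ Y = T '' X

/-- `K` contains an `A`-unimodular copy of `X`. -/
def ContainsCopy {d : ℕ} (A : Set ℝ) (X K : Set (Fin d → ℝ)) : Prop :=
  ∃ Y, IsUnimodCopy A X Y ∧ Y ⊆ K

/-- `K` is `A`-`X`-free: its relative interior contains no `A`-unimodular copy of `X`. -/
def IsFree {d : ℕ} (A : Set ℝ) (X K : Set (Fin d → ℝ)) : Prop :=
  ∀ Y, IsUnimodCopy A X Y → ¬ Y ⊆ intrinsicInterior ℝ K

/-- A convex body: a nonempty compact convex set. -/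
def IsConvexBody {d : ℕ} (K : Set (Fin d → ℝ)) : Prop :=
  Convex ℝ K ∧ IsCompact K ∧ K.Nonempty

/-- A polytope: the convex hull of a finite set of points. -/
def IsPolytope {d : ℕ} (K : Set (Fin d → ℝ)) : Prop :=
  ∃ F : Set (Fin d → ℝ), F.Finite ∧ K = convexHull ℝ F

/-- The width of `K` along the integer linear functional `u`. -/
def widthAlong {d : ℕ} (u : Fin d → ℤ) (K : Set (Fin d → ℝ)) : ℝ :=
  sSup {w | ∃ x ∈ K, ∃ y ∈ K, w = |(∑ i, (u i : ℝ) * x i) - ∑ i, (u i : ℝ) * y i|}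

/-- The lattice width of `K`: the infimum of its widths along nonzero integer functionals. -/
def latticeWidth {d : ℕ} (K : Set (Fin d → ℝ)) : ℝ :=
  sInf {w | ∃ u : Fin d → ℤ, u ≠ 0 ∧ w = widthAlong u K}

/-- The generalised flatness constant `Flt_d^A(X)`: the supremum of the lattice widths of all
convex bodies containing no `A`-unimodular copy of `X`. -/
def Flt (d : ℕ) (A : Set ℝ) (X : Set (Fin d → ℝ)) : ℝ :=
  sSup {w | ∃ K : Set (Fin d → ℝ), IsConvexBody K ∧ ¬ ContainsCopy A X K ∧ w = latticeWidth K}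

/-- The affine dimension of a set: the dimension of the direction of its affine span. -/
def affDim {d : ℕ} (s : Set (Fin d → ℝ)) : ℕ :=
  Module.finrank ℝ (affineSpan ℝ s).direction

/-- Minkowski difference `K ÷ S = {x | S + x ⊆ K}`. -/
def mDiff {d : ℕ} (K S : Set (Fin d → ℝ)) : Set (Fin d → ℝ) :=
  {x | ∀ s ∈ S, s + x ∈ K}

/-- The standard triangle `Δ₂ = conv{(0,0), (1,0), (0,1)} ⊆ ℝ²`. -/
def stdSimplex2 : Set (Fin 2 → ℝ) := convexHull ℝ {![0, 0], ![1, 0], ![0, 1]}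

set_option maxHeartbeats 1000000 in
private lemma dummy_placeholder : True := trivial

set_option maxHeartbeats 1000000

lemma seg_mem (a s : ℝ) (ha : -(1/2:ℝ) < a) (h1 : -a ≤ s) (h2 : s ≤ 1+a) :
    ![s, 0] ∈ convexHull ℝ ({![-a,0], ![1+a,0]} : Set (Fin 2 → ℝ)) := by
  rw [convexHull_pair]
  have hl : (0:ℝ) < 1 + 2*a := by linarith
  refine ⟨(1+a-s)/(1+2*a), (s+a)/(1+2*a),
    div_nonneg (by linarith) hl.le, div_nonneg (by linarith) hl.le, by rw [← add_div, div_eq_one_iff_eq hl.ne']; ring, ?_⟩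
  funext i; fin_cases i <;>
    simp [Pi.smul_apply, smul_eq_mul] <;> field_simp [show (1:ℝ) + a*2 ≠ 0 by linarith] <;> ring

lemma aux2 (P : Set (Fin 2 → ℝ)) (hP : Convex ℝ P)
    (a : ℝ) (ha : -(1/2 : ℝ) < a)
    (hS : convexHull ℝ {![-a, 0], ![1 + a, 0]} ⊆ P)
    (hdiam : ∀ (p : Fin 2 → ℝ) (w : Fin 2 → ℤ) (l' : ℝ),
      Int.gcd (w 0) (w 1) = 1 → 1 + 2 * a < l' →
      ¬ convexHull ℝ {p, p + l' • (fun i => (w i : ℝ))} ⊆ P)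
    (q : Fin 2 → ℝ) (hq : q ∈ P) (εz : ℤ) (hε : εz = 1 ∨ εz = -1)
    (hy : 1 + 2*a < (εz:ℝ) * q 1) : False := by
  set l : ℝ := 1 + 2*a with hl_def
  have hl : (0:ℝ) < l := by simp only [hl_def]; linarith
  set ε : ℝ := (εz : ℝ) with hε_def
  have hε2 : ε * ε = 1 := by rcases hε with h | h <;> simp [hε_def, h]
  set x : ℝ := q 0 with hx_def
  set y : ℝ := ε * q 1 with hy_def
  have hly : l < y := hy
  have hy0 : (0:ℝ) < y := lt_trans hl hly
  have hq1 : q 1 = ε * y := by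
    rw [hy_def]; rw [← mul_assoc, hε2, one_mul]
  have hyl : (0:ℝ) < y + l := by linarith
  set l' : ℝ := 2*l*y/(y+l) with hl'_def
  have h1 : l < l' := by
    rw [hl'_def, lt_div_iff₀ hyl]; nlinarith
  have h2 : l' < y := by
    rw [hl'_def, div_lt_iff₀ hyl]; nlinarith
  have hl'0 : (0:ℝ) < l' := lt_trans hl h1
  set μ : ℝ := l'/y with hμ_def
  have hμ0 : (0:ℝ) < μ := div_pos hl'0 hy0
  have hμ1 : μ < 1 := (div_lt_one hy0).mpr h2
  have hμ1' : (0:ℝ) < 1 - μ := by linarith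
  have hkey : l' = l * (2 - μ) := by
    rw [hμ_def, hl'_def]; field_simp; ring
  set A : ℝ := -a*(1-μ) + μ*x with hA_def
  set u : ℝ := A - (1+a) with hu_def
  set k : ℤ := ⌈u/l'⌉ with hk_def
  have hk1 : u ≤ l' * k := by
    rw [← div_le_iff₀' hl'0]
    · exact Int.le_ceil _
  have hk2 : l' * k ≤ u + l' := by
    have h3 := Int.ceil_lt_add_one (u/l')
    rw [← hk_def] at h3
    have h4 : (k:ℝ) * l' < (u/l' + 1) * l' := mul_lt_mul_of_pos_right h3 hl'0
    rw [add_mul, div_mul_cancel₀ _ (ne_of_gt hl'0)] at h4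
    linarith
  set s : ℝ := max (-a) (A - l'*k) with hs_def
  have hs1 : -a ≤ s := le_max_left _ _
  have hs2 : s ≤ 1 + a := by
    apply max_le (by linarith)
    have : u ≤ l'*k := hk1
    rw [hu_def] at this; linarith
  have hsA : A ≤ s + l'*k := by
    have := le_max_right (-a) (A - l'*k)
    rw [← hs_def] at this; linarith
  have hsB : s + l'*k ≤ A + l*(1-μ) := by
    rcases max_cases (-a) (A - l'*k) with ⟨he, _⟩ | ⟨he, _⟩ <;> rw [hs_def, he]
    · have : l' * k ≤ u + l' := hk2
      rw [hu_def] at this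
      nlinarith [hkey]
    · nlinarith [hμ1']
  set rx : ℝ := (s + l'*k - μ*x)/(1-μ) with hrx_def
  have hr1 : -a ≤ rx := by
    rw [hrx_def, le_div_iff₀ hμ1']
    rw [hA_def] at hsA; linarith
  have hr2 : rx ≤ 1 + a := by
    rw [hrx_def, div_le_iff₀ hμ1']
    rw [hA_def] at hsB; nlinarith [hsB]
  have hrP : ![rx, 0] ∈ P := hS (seg_mem a rx ha hr1 hr2)
  have hpP : ![s, 0] ∈ P := hS (seg_mem a s ha hs1 hs2)
  -- the long segment
  set p : Fin 2 → ℝ := ![s, 0] with hp_def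
  set w : Fin 2 → ℤ := ![k, εz] with hw_def
  have hgcd : Int.gcd (w 0) (w 1) = 1 := by
    rcases hε with h | h <;> simp [hw_def, h, Int.gcd]
  have hq' : p + l' • (fun i => ((w i : ℤ) : ℝ)) = (1-μ) • ![rx, 0] + μ • q := by
    funext i
    fin_cases i
    · simp only [hp_def, hw_def, Pi.add_apply, Pi.smul_apply, smul_eq_mul,
        Matrix.cons_val_zero, Fin.zero_eta]
      rw [hrx_def]; field_simp
      rw [hx_def]; ring
    · simp [hp_def, hw_def, Pi.add_apply, Pi.smul_apply, smul_eq_mul]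
      rw [hq1, hμ_def]; field_simp; ring
  have hq'P : p + l' • (fun i => ((w i : ℤ) : ℝ)) ∈ P := by
    rw [hq']
    exact hP hrP hq (by linarith) hμ0.le (by ring)
  exact hdiam p w l' hgcd h1 (by
    rw [convexHull_pair]
    exact hP.segment_subset hpP hq'P)


/-- A polygon whose rational diameter `l = 1 + 2a > 0` is achieved by the horizontal segment
`conv{(-a,0), (1+a,0)}` is contained in the horizontal strip `{-l ≤ y ≤ l}`. -/
theorem rational_diameter_strip (P : Set (Fin 2 → ℝ))
    (hPpoly : IsPolytope P) (hPfull : affineSpan ℝ P = ⊤)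
    (a : ℝ) (ha : -(1/2 : ℝ) < a)
    (hS : convexHull ℝ {![-a, 0], ![1 + a, 0]} ⊆ P)
    (hdiam : ∀ (p : Fin 2 → ℝ) (w : Fin 2 → ℤ) (l' : ℝ),
      Int.gcd (w 0) (w 1) = 1 → 1 + 2 * a < l' →
      ¬ convexHull ℝ {p, p + l' • (fun i => (w i : ℝ))} ⊆ P) :
    P ⊆ {q : Fin 2 → ℝ | -(1 + 2 * a) ≤ q 1 ∧ q 1 ≤ 1 + 2 * a} := by
  obtain ⟨F, hF, rfl⟩ := hPpoly
  have hP : Convex ℝ (convexHull ℝ F) := convex_convexHull ℝ F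
  intro q hq
  constructor
  · by_contra h
    push_neg at h
    exact aux2 _ hP a ha hS hdiam q hq (-1) (Or.inr rfl) (by push_cast; linarith)
  · by_contra h
    push_neg at h
    exact aux2 _ hP a ha hS hdiam q hq 1 (Or.inl rfl) (by push_cast; linarith)
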